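/- Let X be a metric space, H₀ and H real Hilbert spaces, Φ : X → H₀ a bounded Borel-measurable map such that the kernel mean embedding Π is injective (characteristic kernel) and its image S = Π(P(X)) is compact, and let C ⊆ H be compact and convex. For each M ≥ 1 let g_M : X^M → C satisfy: (1) g_M(σ·x) = g_M(x) for every permutation σ of {1,…,M} and every x ∈ X^M; (2) there is L ≥ 0, independent of M, such that ‖g_M(x) − g_M(x')‖ ≤ L‖Π̂(x) − Π̂(x')‖ for all x, x' ∈ X^M. Then there exist a strictly increasing sequence of indices (M_ℓ)_ℓ and an L-Lipschitz map G : S → C such that lim_{ℓ→∞} sup_{x ∈ X^{M_ℓ}} ‖g_{M_ℓ}(x) − G(Π̂(x))‖ = 0. -/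

import Mathlib

open MeasureTheory
open scoped ENNReal
set_option linter.unusedSectionVars false
set_option linter.unusedVariables false
set_option maxHeartbeats 1000000

/-- The empirical embedding `Π̂(x) = (1/M) ∑ m, Φ (x m)` of a tuple `x ∈ X^M`. -/
noncomputable def empEmbed {X H₀ : Type*} [AddCommMonoid H₀] [Module ℝ H₀]
    (Φ : X → H₀) {M : ℕ} (x : Fin M → X) : H₀ :=
  (M : ℝ)⁻¹ • ∑ m : Fin M, Φ (x m)

/-- The image `S = Π(P(X))` of the set of all Borel probability measures on `X`
under the kernel mean embedding `Π(μ) = ∫ x, Φ x ∂μ`. -/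
def kmeImage {X : Type*} [MeasurableSpace X] {H₀ : Type*} [NormedAddCommGroup H₀]
    [NormedSpace ℝ H₀] (Φ : X → H₀) : Set H₀ :=
  {h : H₀ | ∃ μ : Measure X, IsProbabilityMeasure μ ∧ h = ∫ x, Φ x ∂μ}

section Aux

variable {X : Type*} [MeasurableSpace X]
    {H₀ : Type*} [NormedAddCommGroup H₀] [NormedSpace ℝ H₀] [CompleteSpace H₀]
    (Φ : X → H₀)

lemma integrable_of_bdd (hΦmeas : StronglyMeasurable Φ) {B : ℝ} (hB : ∀ x, ‖Φ x‖ ≤ B)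
    (μ : Measure X) [IsFiniteMeasure μ] : Integrable Φ μ :=
  ⟨hΦmeas.aestronglyMeasurable, HasFiniteIntegral.of_bounded (C := B)
    (Filter.Eventually.of_forall hB)⟩

lemma empEmbed_mem_kmeImage (hΦmeas : StronglyMeasurable Φ) {B : ℝ} (hB : ∀ x, ‖Φ x‖ ≤ B)
    {M : ℕ} (hM : 1 ≤ M) (x : Fin M → X) : empEmbed Φ x ∈ kmeImage Φ := by
  have hM0 : (M : ℝ≥0∞) ≠ 0 := by
    have : M ≠ 0 := by omega
    simpa using this
  refine ⟨(M : ℝ≥0∞)⁻¹ • ∑ m : Fin M, Measure.dirac (x m), ?_, ?_⟩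
  · constructor
    simp [Measure.smul_apply, Measure.finset_sum_apply, smul_eq_mul,
      ENNReal.inv_mul_cancel hM0 (by simp)]
  · rw [integral_smul_measure, integral_finset_sum_measure]
    · simp only [integral_dirac' _ _ hΦmeas, empEmbed]
      congr 1
      simp [ENNReal.toReal_inv]
    · intro m _
      exact integrable_of_bdd Φ hΦmeas hB _


/-- Repetition keeps the empirical embedding. -/
lemma empEmbed_repeat {M k : ℕ} (hM : 1 ≤ M) (hk : 1 ≤ k) (x : Fin M → X) :
    ∃ y : Fin (k * M) → X, empEmbed Φ y = empEmbed Φ x := by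
  refine ⟨fun j => x (finProdFinEquiv.symm j).2, ?_⟩
  unfold empEmbed
  rw [← Equiv.sum_comp (finProdFinEquiv : Fin k × Fin M ≃ Fin (k * M))]
  simp only [Equiv.symm_apply_apply]
  rw [Fintype.sum_prod_type]
  simp only [Finset.sum_const, Finset.card_univ, Fintype.card_fin]
  have hk0 : (k:ℝ) ≠ 0 := by exact_mod_cast (by omega : k ≠ 0)
  have hM0 : (M:ℝ) ≠ 0 := by exact_mod_cast (by omega : M ≠ 0)
  rw [← Nat.cast_smul_eq_nsmul ℝ, smul_smul]
  congr 1
  push_cast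
  field_simp

lemma empEmbed_cast {M N : ℕ} (h : N = M) (y : Fin M → X) :
    empEmbed Φ (y ∘ Fin.cast h) = empEmbed Φ y := by subst h; rfl

/-- Concatenation averages the empirical embeddings. -/
lemma empEmbed_append {M N : ℕ} (x : Fin M → X) (y : Fin N → X) :
    empEmbed Φ (Fin.append x y) =
      ((M + N : ℕ) : ℝ)⁻¹ • ((M : ℝ) • empEmbed Φ x + (N : ℝ) • empEmbed Φ y) := by
  unfold empEmbed
  rw [Fin.sum_univ_add (f := fun i => Φ (Fin.append x y i))]
  simp only [Fin.append_left, Fin.append_right]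
  congr 1
  congr 1
  · rcases Nat.eq_zero_or_pos M with hM | hM
    · subst hM; simp
    · rw [smul_inv_smul₀ (by exact_mod_cast hM.ne')]
  · rcases Nat.eq_zero_or_pos N with hN | hN
    · subst hN; simp
    · rw [smul_inv_smul₀ (by exact_mod_cast hN.ne')]

/-- The set of empirical embeddings. -/
def EmpSet : Set H₀ := {h | ∃ M : ℕ, 1 ≤ M ∧ ∃ x : Fin M → X, empEmbed Φ x = h}

lemma midpoint_mem_EmpSet {a b : H₀} (ha : a ∈ EmpSet Φ) (hb : b ∈ EmpSet Φ) :
    (2 : ℝ)⁻¹ • a + (2 : ℝ)⁻¹ • b ∈ EmpSet Φ := by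
  obtain ⟨M, hM, x, hx⟩ := ha
  obtain ⟨N, hN, y, hy⟩ := hb
  obtain ⟨x', hx'⟩ := empEmbed_repeat Φ hM hN x
  obtain ⟨y', hy'⟩ := empEmbed_repeat Φ hN hM y
  refine ⟨N * M + M * N, by
    have := Nat.mul_le_mul hM hN
    omega, Fin.append x' y', ?_⟩
  rw [empEmbed_append, hx', hy', hx, hy]
  have h1 : ((N * M + M * N : ℕ) : ℝ) = 2 * (M * N) := by push_cast; ring
  have h2 : (0:ℝ) < (M:ℝ) * N := by
    have : (0:ℝ) < (M:ℝ) := by exact_mod_cast hM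
    have : (0:ℝ) < (N:ℝ) := by exact_mod_cast hN
    positivity
  have hM0 : (M:ℝ) ≠ 0 := by exact_mod_cast (by omega : M ≠ 0)
  have hN0 : (N:ℝ) ≠ 0 := by exact_mod_cast (by omega : N ≠ 0)
  rw [h1]
  push_cast
  rw [smul_add, smul_smul, smul_smul]
  congr 1 <;> (congr 1; field_simp)


/-- The closure of a set stable under midpoints is convex. -/
lemma convex_closure_of_midpoint {E : Type*} [NormedAddCommGroup E] [NormedSpace ℝ E]
    {K : Set E} (h : ∀ a ∈ K, ∀ b ∈ K, (2:ℝ)⁻¹ • a + (2:ℝ)⁻¹ • b ∈ K) :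
    Convex ℝ (closure K) := by
  have hmid : ∀ a ∈ closure K, ∀ b ∈ closure K,
      (2:ℝ)⁻¹ • a + (2:ℝ)⁻¹ • b ∈ closure K := by
    intro a ha b hb
    obtain ⟨u, hu, hua⟩ := mem_closure_iff_seq_limit.1 ha
    obtain ⟨v, hv, hvb⟩ := mem_closure_iff_seq_limit.1 hb
    have ht : Filter.Tendsto (fun n => (2:ℝ)⁻¹ • u n + (2:ℝ)⁻¹ • v n) Filter.atTop
        (nhds ((2:ℝ)⁻¹ • a + (2:ℝ)⁻¹ • b)) := (hua.const_smul _).add (hvb.const_smul _)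
    exact mem_closure_of_tendsto ht (Filter.Eventually.of_forall fun n => h _ (hu n) _ (hv n))
  have key : ∀ k : ℕ, ∀ i : ℕ, i ≤ 2^k → ∀ a ∈ closure K, ∀ b ∈ closure K,
      ((i:ℝ)/(2:ℝ)^k) • a + (1 - (i:ℝ)/(2:ℝ)^k) • b ∈ closure K := by
    intro k
    induction k with
    | zero =>
      intro i hi a ha b hb
      interval_cases i
      · simpa using hb
      · simpa using ha
    | succ k IH =>
      intro i hi a ha b hb
      set i₁ := min i (2^k) with hi₁def
      set i₂ := i - i₁ with hi₂def
      have h₁ : i₁ ≤ 2^k := min_le_right _ _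
      have h₂ : i₂ ≤ 2^k := by
        have : (2:ℕ)^(k+1) = 2^k + 2^k := by ring
        omega
      have hi12 : i₁ + i₂ = i := by
        have : i₁ ≤ i := min_le_left _ _
        omega
      have hc := hmid _ (IH i₁ h₁ a ha b hb) _ (IH i₂ h₂ a ha b hb)
      have hcast : (i:ℝ) = (i₁:ℝ) + (i₂:ℝ) := by
        rw [← hi12]; push_cast; ring
      rw [hcast]
      convert hc using 1
      module
  rintro a ha b hb t₁ t₂ ht₁ ht₂ hsum
  have hts : t₂ = 1 - t₁ := by linarith
  subst hts
  have ht1le : t₁ ≤ 1 := by linarith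
  set c : ℕ → ℝ := fun k => ((⌊t₁ * 2^k⌋₊ : ℝ)/(2:ℝ)^k) with hc
  have hct : Filter.Tendsto c Filter.atTop (nhds t₁) := by
    have h2k : ∀ k : ℕ, (0:ℝ) < (2:ℝ)^k := fun k => by positivity
    have hup : ∀ k, c k ≤ t₁ := by
      intro k
      rw [hc, div_le_iff₀ (h2k k)]
      exact Nat.floor_le (by positivity)
    have hlow : ∀ k, t₁ - ((2:ℝ)^k)⁻¹ ≤ c k := by
      intro k
      rw [hc, sub_le_iff_le_add, div_add' _ _ _ (h2k k).ne', le_div_iff₀ (h2k k)]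
      have h1 := Nat.lt_floor_add_one (t₁ * 2^k)
      have h2 : ((2:ℝ)^k)⁻¹ * 2^k = 1 := inv_mul_cancel₀ (h2k k).ne'
      nlinarith [h1, h2]
    have hl : Filter.Tendsto (fun k : ℕ => t₁ - ((2:ℝ)^k)⁻¹) Filter.atTop (nhds t₁) := by
      have : Filter.Tendsto (fun k : ℕ => ((2:ℝ)^k)⁻¹) Filter.atTop (nhds 0) :=
        Filter.Tendsto.inv_tendsto_atTop
          (tendsto_pow_atTop_atTop_of_one_lt one_lt_two)
      simpa using (tendsto_const_nhds.sub this)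
    exact tendsto_of_tendsto_of_tendsto_of_le_of_le hl tendsto_const_nhds hlow hup
  have hmemk : ∀ k, c k • a + (1 - c k) • b ∈ closure K := by
    intro k
    have hfl : ⌊t₁ * 2^k⌋₊ ≤ 2^k := by
      have : t₁ * 2^k ≤ ((2^k : ℕ) : ℝ) := by
        push_cast
        nlinarith [pow_pos (show (0:ℝ) < 2 by norm_num) k]
      calc ⌊t₁ * 2^k⌋₊ ≤ ⌊((2^k : ℕ) : ℝ)⌋₊ := Nat.floor_le_floor this
        _ = 2^k := Nat.floor_natCast _
    exact key k _ hfl a ha b hb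
  have htend : Filter.Tendsto (fun k => c k • a + (1 - c k) • b) Filter.atTop
      (nhds (t₁ • a + (1 - t₁) • b)) :=
    (hct.smul_const a).add ((tendsto_const_nhds.sub hct).smul_const b)
  exact isClosed_closure.mem_of_tendsto htend (Filter.Eventually.of_forall hmemk)


lemma range_subset_EmpSet : Set.range Φ ⊆ EmpSet Φ := by
  rintro _ ⟨x, rfl⟩
  exact ⟨1, le_refl 1, fun _ => x, by simp [empEmbed]⟩

lemma kmeImage_subset_closure_EmpSet (hΦmeas : StronglyMeasurable Φ)
    {B : ℝ} (hB : ∀ x, ‖Φ x‖ ≤ B) :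
    kmeImage Φ ⊆ closure (EmpSet Φ) := by
  have hconv : Convex ℝ (closure (EmpSet Φ)) :=
    convex_closure_of_midpoint (fun a ha b hb => midpoint_mem_EmpSet Φ ha hb)
  have hhull : convexHull ℝ (Set.range Φ) ⊆ closure (EmpSet Φ) :=
    convexHull_min ((range_subset_EmpSet Φ).trans subset_closure) hconv
  rintro _ ⟨μ, hμ, rfl⟩
  have hint : (∫ x, Φ x ∂μ) ∈ closure (convexHull ℝ (Set.range Φ)) := by
    refine Convex.integral_mem ((convex_convexHull ℝ _).closure) isClosed_closure
      (Filter.Eventually.of_forall fun x => subset_closure (subset_convexHull ℝ _ ⟨x, rfl⟩))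
      (integrable_of_bdd Φ hΦmeas hB μ)
  exact (closure_minimal hhull isClosed_closure) hint

end Aux


/-- Mean field limit existence for feedback maps: given permutation-invariant maps
`g_M : X^M → C` into a compact convex set `C`, uniformly Lipschitz w.r.t. the embedded
empirical measures, there are a subsequence `M_ℓ` and an `L`-Lipschitz map `G : S → C`
with `sup_{x ∈ X^{M_ℓ}} ‖g_{M_ℓ}(x) - G(Π̂(x))‖ → 0`. -/
theorem mfl_feedback_maps
    {X : Type*} [MetricSpace X] [MeasurableSpace X] [BorelSpace X]
    {H₀ : Type*} [NormedAddCommGroup H₀] [InnerProductSpace ℝ H₀] [CompleteSpace H₀]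
    {H : Type*} [NormedAddCommGroup H] [InnerProductSpace ℝ H] [CompleteSpace H]
    (Φ : X → H₀) (hΦmeas : StronglyMeasurable Φ) (hΦbdd : ∃ C : ℝ, ∀ x : X, ‖Φ x‖ ≤ C)
    -- the kernel is characteristic: the kernel mean embedding is injective
    (hinj : ∀ μ ν : Measure X, IsProbabilityMeasure μ → IsProbabilityMeasure ν →
      (∫ y, Φ y ∂μ) = (∫ y, Φ y ∂ν) → μ = ν)
    -- the image of the kernel mean embedding is compact
    (hScpt : IsCompact (kmeImage Φ))
    (C : Set H) (hCcpt : IsCompact C) (hCconv : Convex ℝ C)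
    (g : (M : ℕ) → (Fin M → X) → H)
    (hgC : ∀ M : ℕ, 1 ≤ M → ∀ x : Fin M → X, g M x ∈ C)
    -- (1) permutation invariance
    (hperm : ∀ M : ℕ, 1 ≤ M → ∀ σ : Equiv.Perm (Fin M), ∀ x : Fin M → X,
      g M (x ∘ σ) = g M x)
    (L : ℝ) (hL : 0 ≤ L)
    -- (2) uniform Lipschitz continuity w.r.t. the embedded empirical measures
    (hlip : ∀ M : ℕ, 1 ≤ M → ∀ x x' : Fin M → X,
      ‖g M x - g M x'‖ ≤ L * ‖empEmbed Φ x - empEmbed Φ x'‖) :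
    ∃ Msub : ℕ → ℕ, StrictMono Msub ∧ (∀ ℓ : ℕ, 1 ≤ Msub ℓ) ∧
      ∃ G : H₀ → H,
        (∀ s ∈ kmeImage Φ, G s ∈ C) ∧
        (∀ s ∈ kmeImage Φ, ∀ s' ∈ kmeImage Φ, ‖G s - G s'‖ ≤ L * ‖s - s'‖) ∧
        (∀ ε : ℝ, 0 < ε → ∃ N : ℕ, ∀ ℓ : ℕ, N ≤ ℓ → ∀ x : Fin (Msub ℓ) → X,
          ‖g (Msub ℓ) x - G (empEmbed Φ x)‖ ≤ ε) := by
  classical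
  by_cases hX : Nonempty X
  swap
  · refine ⟨fun ℓ => ℓ + 1, fun a b h => Nat.add_lt_add_right h 1, fun ℓ => Nat.succ_pos ℓ, fun _ => 0, ?_, ?_, ?_⟩
    · rintro s ⟨μ, hμ, -⟩
      have h1 : μ Set.univ = 1 := measure_univ
      rw [Set.univ_eq_empty_iff.2 (not_nonempty_iff.1 hX)] at h1
      simp at h1
    · rintro s ⟨μ, hμ, -⟩ s' hs'
      have h1 : μ Set.univ = 1 := measure_univ
      rw [Set.univ_eq_empty_iff.2 (not_nonempty_iff.1 hX)] at h1
      simp at h1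
    · intro ε hε
      exact ⟨0, fun ℓ _ x => absurd ⟨x ⟨0, Nat.succ_pos ℓ⟩⟩ hX⟩
  obtain ⟨x₀⟩ := hX
  obtain ⟨B, hB⟩ := hΦbdd
  have hfact1 : ∀ ℓ : ℕ, 1 ≤ (ℓ + 1).factorial := fun ℓ => Nat.factorial_pos _
  have hemp_mem : ∀ {M : ℕ}, 1 ≤ M → ∀ x : Fin M → X, empEmbed Φ x ∈ kmeImage Φ :=
    fun hM x => empEmbed_mem_kmeImage Φ hΦmeas hB hM x
  have hdense : kmeImage Φ ⊆ closure (EmpSet Φ) :=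
    kmeImage_subset_closure_EmpSet Φ hΦmeas hB
  obtain ⟨c, hcS, hccount, hcdense⟩ := EMetric.subset_countable_closure_of_compact hScpt
  have hSne : (kmeImage Φ).Nonempty := ⟨_, hemp_mem (M := 1) le_rfl (fun _ => x₀)⟩
  have hcne : c.Nonempty := by
    rcases hSne with ⟨s, hs⟩
    by_contra hemp
    rw [Set.not_nonempty_iff_eq_empty] at hemp
    have := hcdense hs
    simp [hemp] at this
  obtain ⟨e, rfl⟩ := hccount.exists_eq_range hcne
  have he_mem : ∀ n, e n ∈ kmeImage Φ := fun n => hcS ⟨n, rfl⟩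
  set EmpM : ℕ → Set H₀ := fun M => Set.range (fun x : Fin M → X => empEmbed Φ x) with hEmpM
  have hEmpMne : ∀ M, (EmpM M).Nonempty := fun M => ⟨_, ⟨fun _ => x₀, rfl⟩⟩
  have happrox : ∀ s ∈ kmeImage Φ, ∀ ε : ℝ, 0 < ε →
      ∀ᶠ ℓ in Filter.atTop, Metric.infDist s (EmpM ((ℓ + 1).factorial)) < ε := by
    intro s hs ε hε
    obtain ⟨a, ha, hdist⟩ := Metric.mem_closure_iff.1 (hdense hs) ε hε
    obtain ⟨M, hM, x, hx⟩ := ha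
    rw [Filter.eventually_atTop]
    refine ⟨M, fun ℓ hℓ => ?_⟩
    obtain ⟨k, hk⟩ := Nat.dvd_factorial (by omega : 0 < M) (by omega : M ≤ ℓ + 1)
    have hk1 : 1 ≤ k := by
      rcases Nat.eq_zero_or_pos k with h0 | h
      · exfalso; rw [h0, Nat.mul_zero] at hk; have := hfact1 ℓ; omega
      · exact h
    obtain ⟨y, hy⟩ := empEmbed_repeat Φ hM hk1 x
    have hkm : (ℓ + 1).factorial = k * M := by rw [hk]; ring
    have hmem : empEmbed Φ (y ∘ Fin.cast hkm) ∈ EmpM ((ℓ + 1).factorial) := ⟨_, rfl⟩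
    have hle := Metric.infDist_le_dist_of_mem (x := s) hmem
    rw [empEmbed_cast, hy, hx] at hle
    exact lt_of_le_of_lt hle hdist
  have hchoice : ∀ n ℓ : ℕ, ∃ x : Fin ((ℓ + 1).factorial) → X,
      dist (e n) (empEmbed Φ x)
        < Metric.infDist (e n) (EmpM ((ℓ + 1).factorial)) + 1 / (ℓ + 1) := by
    intro n ℓ
    have h1 : (0 : ℝ) < 1 / (ℓ + 1) := by positivity
    have h2 : Metric.infDist (e n) (EmpM ((ℓ + 1).factorial))
        < Metric.infDist (e n) (EmpM ((ℓ + 1).factorial)) + 1 / (ℓ + 1) :=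
      lt_add_of_pos_right _ h1
    obtain ⟨y, ⟨x, rfl⟩, hxy⟩ := (Metric.infDist_lt_iff (hEmpMne _)).1 h2
    exact ⟨x, hxy⟩
  choose t ht using hchoice
  have hterr : ∀ n : ℕ, ∀ ε : ℝ, 0 < ε →
      ∀ᶠ ℓ in Filter.atTop, dist (e n) (empEmbed Φ (t n ℓ)) < ε := by
    intro n ε hε
    have h1 := happrox _ (he_mem n) (ε / 2) (by positivity)
    have h2 : ∀ᶠ ℓ : ℕ in Filter.atTop, (1 : ℝ) / (ℓ + 1) < ε / 2 :=
      tendsto_one_div_add_atTop_nhds_zero_nat.eventually (gt_mem_nhds (by positivity))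
    filter_upwards [h1, h2] with ℓ h1 h2
    calc dist (e n) (empEmbed Φ (t n ℓ)) < _ + 1 / (ℓ + 1) := ht n ℓ
      _ < ε / 2 + ε / 2 := by linarith
      _ = ε := by ring
  have hK : IsCompact (Set.univ.pi fun _ : ℕ => C) := isCompact_univ_pi fun _ => hCcpt
  have hFmem : ∀ ℓ : ℕ, (fun n => g ((ℓ + 1).factorial) (t n ℓ)) ∈ Set.univ.pi fun _ : ℕ => C :=
    fun ℓ => Set.mem_univ_pi.2 fun n => hgC _ (hfact1 ℓ) _
  obtain ⟨flim, hflimK, φ, hφmono, hφtend⟩ := hK.tendsto_subseq hFmem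
  have hflimC : ∀ n, flim n ∈ C := fun n => Set.mem_univ_pi.1 hflimK n
  have hpt : ∀ n, Filter.Tendsto (fun ℓ => g ((φ ℓ + 1).factorial) (t n (φ ℓ)))
      Filter.atTop (nhds (flim n)) := fun n => tendsto_pi_nhds.1 hφtend n
  have hflimlip : ∀ n m : ℕ, ‖flim n - flim m‖ ≤ L * ‖e n - e m‖ := by
    intro n m
    refine le_of_forall_pos_le_add ?_
    intro ε hε
    set δ := ε / (2 * L + 2) with hδdef
    have hδ : 0 < δ := by positivity
    have hδe : δ * (2 * L + 2) = ε := by rw [hδdef]; field_simp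
    have h1 : Filter.Tendsto (fun ℓ => ‖g ((φ ℓ + 1).factorial) (t n (φ ℓ))
        - g ((φ ℓ + 1).factorial) (t m (φ ℓ))‖) Filter.atTop (nhds ‖flim n - flim m‖) :=
      ((hpt n).sub (hpt m)).norm
    refine le_of_tendsto h1 ?_
    filter_upwards [hφmono.tendsto_atTop.eventually (hterr n δ hδ),
      hφmono.tendsto_atTop.eventually (hterr m δ hδ)] with ℓ h2 h3
    refine (hlip _ (hfact1 (φ ℓ)) _ _).trans ?_
    have h5 : ‖empEmbed Φ (t n (φ ℓ)) - empEmbed Φ (t m (φ ℓ))‖ ≤ ‖e n - e m‖ + 2 * δ := by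
      have h4 := dist_triangle4 (empEmbed Φ (t n (φ ℓ))) (e n) (e m) (empEmbed Φ (t m (φ ℓ)))
      rw [← dist_eq_norm, ← dist_eq_norm]
      rw [dist_comm (e n) (empEmbed Φ (t n (φ ℓ)))] at h2
      rw [dist_comm (e m) (empEmbed Φ (t m (φ ℓ)))] at h3
      rw [dist_comm (e m) (empEmbed Φ (t m (φ ℓ)))] at h4
      linarith
    calc L * ‖empEmbed Φ (t n (φ ℓ)) - empEmbed Φ (t m (φ ℓ))‖
        ≤ L * (‖e n - e m‖ + 2 * δ) := mul_le_mul_of_nonneg_left h5 hL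
      _ ≤ L * ‖e n - e m‖ + ε := by nlinarith [hδ.le]
  set nk : H₀ → ℕ → ℕ := fun s k =>
    if h : ∃ n, dist (e n) s < 1 / (k + 1) then h.choose else 0 with hnkdef
  have hnk : ∀ s ∈ kmeImage Φ, ∀ k : ℕ, dist (e (nk s k)) s < 1 / (k + 1) := by
    intro s hs k
    have h1 : (0 : ℝ) < 1 / ((k : ℝ) + 1) := by positivity
    obtain ⟨b, ⟨nb, rfl⟩, hb⟩ := Metric.mem_closure_iff.1 (hcdense hs) _ h1
    have hex : ∃ n, dist (e n) s < 1 / ((k : ℝ) + 1) := ⟨nb, by rwa [dist_comm]⟩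
    simp only [hnkdef, dif_pos hex]
    exact hex.choose_spec
  set u : H₀ → ℕ → H := fun s k => flim (nk s k) with hudef
  have hub : ∀ s ∈ kmeImage Φ, ∀ s' ∈ kmeImage Φ, ∀ k j : ℕ,
      ‖u s k - u s' j‖ ≤ L * (1 / (k + 1) + ‖s - s'‖ + 1 / (j + 1)) := by
    intro s hs s' hs' k j
    refine (hflimlip _ _).trans ?_
    apply mul_le_mul_of_nonneg_left _ hL
    have h4 := dist_triangle4 (e (nk s k)) s s' (e (nk s' j))
    have h5 := hnk s hs k
    have h6 := hnk s' hs' j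
    rw [dist_comm (e (nk s' j)) s'] at h6
    rw [← dist_eq_norm, ← dist_eq_norm]
    linarith
  have hcauchy : ∀ s ∈ kmeImage Φ, CauchySeq (u s) := by
    intro s hs
    apply cauchySeq_of_le_tendsto_0 (b := fun N : ℕ => L * (2 / (N + 1)))
    · intro k j N hk hj
      rw [dist_eq_norm]
      refine (hub s hs s hs k j).trans ?_
      apply mul_le_mul_of_nonneg_left _ hL
      simp only [sub_self, norm_zero]
      have hk1 : (1 : ℝ) / (k + 1) ≤ 1 / (N + 1) := by
        apply one_div_le_one_div_of_le (by positivity)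
        have : (N : ℝ) ≤ k := by exact_mod_cast hk
        linarith
      have hj1 : (1 : ℝ) / (j + 1) ≤ 1 / (N + 1) := by
        apply one_div_le_one_div_of_le (by positivity)
        have : (N : ℝ) ≤ j := by exact_mod_cast hj
        linarith
      have : (2 : ℝ) / (N + 1) = 1 / (N + 1) + 1 / (N + 1) := by ring
      linarith
    · have h1 : Filter.Tendsto (fun N : ℕ => L * (2 * (1 / (N + 1)))) Filter.atTop
          (nhds (L * (2 * 0))) :=
        (tendsto_one_div_add_atTop_nhds_zero_nat.const_mul 2).const_mul L
      simpa [mul_one_div, div_eq_mul_inv] using h1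
  set G : H₀ → H := fun s => Filter.limUnder Filter.atTop (u s) with hGdef
  have hGtend : ∀ s ∈ kmeImage Φ, Filter.Tendsto (u s) Filter.atTop (nhds (G s)) :=
    fun s hs => (hcauchy s hs).tendsto_limUnder
  have hGC : ∀ s ∈ kmeImage Φ, G s ∈ C := fun s hs =>
    hCcpt.isClosed.mem_of_tendsto (hGtend s hs) (Filter.Eventually.of_forall fun k => hflimC _)
  have hGlip : ∀ s ∈ kmeImage Φ, ∀ s' ∈ kmeImage Φ, ‖G s - G s'‖ ≤ L * ‖s - s'‖ := by
    intro s hs s' hs'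
    have h1 : Filter.Tendsto (fun k => ‖u s k - u s' k‖) Filter.atTop
        (nhds ‖G s - G s'‖) := ((hGtend s hs).sub (hGtend s' hs')).norm
    have h2 : Filter.Tendsto (fun k : ℕ => L * (1 / (k + 1) + ‖s - s'‖ + 1 / (k + 1)))
        Filter.atTop (nhds (L * (0 + ‖s - s'‖ + 0))) :=
      (((tendsto_one_div_add_atTop_nhds_zero_nat.add tendsto_const_nhds).add
        tendsto_one_div_add_atTop_nhds_zero_nat).const_mul L)
    have h3 := le_of_tendsto_of_tendsto h1 h2
      (Filter.Eventually.of_forall fun k => hub s hs s' hs' k k)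
    simpa using h3
  have hGf : ∀ s ∈ kmeImage Φ, ∀ n : ℕ, ‖G s - flim n‖ ≤ L * ‖s - e n‖ := by
    intro s hs n
    have h1 : Filter.Tendsto (fun k => ‖u s k - flim n‖) Filter.atTop
        (nhds ‖G s - flim n‖) := ((hGtend s hs).sub tendsto_const_nhds).norm
    have h2 : Filter.Tendsto (fun k : ℕ => L * (1 / (k + 1) + ‖s - e n‖))
        Filter.atTop (nhds (L * (0 + ‖s - e n‖))) :=
      ((tendsto_one_div_add_atTop_nhds_zero_nat.add tendsto_const_nhds).const_mul L)
    have hb' : ∀ k : ℕ, ‖u s k - flim n‖ ≤ L * (1 / (k + 1) + ‖s - e n‖) := by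
      intro k
      refine (hflimlip _ _).trans ?_
      apply mul_le_mul_of_nonneg_left _ hL
      have h5 := hnk s hs k
      have h6 := dist_triangle (e (nk s k)) s (e n)
      rw [← dist_eq_norm, ← dist_eq_norm]
      linarith
    have h3 := le_of_tendsto_of_tendsto h1 h2 (Filter.Eventually.of_forall hb')
    simpa using h3
  refine ⟨fun ℓ => (φ ℓ + 1).factorial, ?_, fun ℓ => hfact1 (φ ℓ), G, hGC, hGlip, ?_⟩
  · intro a b hab
    have := hφmono hab
    exact (Nat.factorial_lt (by omega)).2 (by omega)
  · intro ε hε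
    set δ := ε / (3 * L + 1) with hδdef
    have hδ : 0 < δ := by positivity
    have hδe : (3 * L + 1) * δ = ε := by rw [hδdef]; field_simp
    have hcover : kmeImage Φ ⊆ ⋃ n : ℕ, Metric.ball (e n) δ := by
      intro s hs
      obtain ⟨b, ⟨nb, rfl⟩, hb⟩ := Metric.mem_closure_iff.1 (hcdense hs) δ hδ
      exact Set.mem_iUnion.2 ⟨nb, Metric.mem_ball.2 hb⟩
    obtain ⟨T, hT⟩ := hScpt.elim_finite_subcover (fun n : ℕ => Metric.ball (e n) δ)
      (fun n => Metric.isOpen_ball) hcover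
    have hev : ∀ᶠ ℓ in Filter.atTop, ∀ n ∈ T,
        dist (e n) (empEmbed Φ (t n (φ ℓ))) < δ ∧
        ‖g ((φ ℓ + 1).factorial) (t n (φ ℓ)) - flim n‖ < δ := by
      rw [Filter.eventually_all_finset]
      intro n hn
      have h1 := hφmono.tendsto_atTop.eventually (hterr n δ hδ)
      have h2 : ∀ᶠ ℓ in Filter.atTop,
          ‖g ((φ ℓ + 1).factorial) (t n (φ ℓ)) - flim n‖ < δ := by
        filter_upwards [(hpt n).eventually (Metric.ball_mem_nhds (flim n) hδ)] with ℓ hmem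
        rw [← dist_eq_norm]
        exact hmem
      filter_upwards [h1, h2] with ℓ ha hb using ⟨ha, hb⟩
    obtain ⟨N, hN⟩ := Filter.eventually_atTop.1 hev
    refine ⟨N, fun ℓ hℓ x => ?_⟩
    have hsmem : empEmbed Φ x ∈ kmeImage Φ := hemp_mem (hfact1 (φ ℓ)) x
    obtain ⟨n, hnT, hball⟩ := Set.mem_iUnion₂.1 (hT hsmem)
    obtain ⟨h1, h2⟩ := hN ℓ hℓ n hnT
    have hdist : dist (empEmbed Φ x) (e n) < δ := Metric.mem_ball.1 hball
    have hterm1 : ‖g ((φ ℓ + 1).factorial) x - g ((φ ℓ + 1).factorial) (t n (φ ℓ))‖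
        ≤ L * (2 * δ) := by
      refine (hlip _ (hfact1 (φ ℓ)) _ _).trans ?_
      apply mul_le_mul_of_nonneg_left _ hL
      rw [← dist_eq_norm]
      have h6 := dist_triangle (empEmbed Φ x) (e n) (empEmbed Φ (t n (φ ℓ)))
      linarith
    have hterm3 : ‖flim n - G (empEmbed Φ x)‖ ≤ L * δ := by
      rw [norm_sub_rev]
      refine (hGf _ hsmem n).trans ?_
      apply mul_le_mul_of_nonneg_left _ hL
      rw [← dist_eq_norm]
      exact hdist.le
    have htri := dist_triangle4 (g ((φ ℓ + 1).factorial) x)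
      (g ((φ ℓ + 1).factorial) (t n (φ ℓ))) (flim n) (G (empEmbed Φ x))
    rw [dist_eq_norm, dist_eq_norm, dist_eq_norm, dist_eq_norm] at htri
    have hsum : L * (2 * δ) + δ + L * δ = (3 * L + 1) * δ := by ring
    linarith
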